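/- Let α > 0, β > 1 and γ > 0 satisfy γ·(β−1) > 1. Then there exists a constant Θ > 0 such that every solution (U,V) of the kinetic system defined on [0, ∞) with U(0) > 0 and V(0) > 0 satisfies liminf_{t → ∞} U(t) ≥ Θ and liminf_{t → ∞} V(t) ≥ Θ (uniform persistence: Θ does not depend on the solution). -/

import Mathlib

set_option maxHeartbeats 1000000
open Filter Set Real Topology


/-- If `f' ≤ c f` on the interior, then `f b ≤ f a * exp (c (b-a))`. -/
lemma RM.deriv_ineq_le {f d : ℝ → ℝ} {a b c : ℝ} (hab : a ≤ b)
    (hf : ∀ t ∈ Icc a b, HasDerivWithinAt f (d t) (Icc a b) t)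
    (hd : ∀ t ∈ Ioo a b, d t ≤ c * f t) :
    f b ≤ f a * Real.exp (c * (b - a)) := by
  set g : ℝ → ℝ := fun t => f t * Real.exp (-c * t) with hg
  have hgd : ∀ t ∈ Icc a b, HasDerivWithinAt g
      ((d t - c * f t) * Real.exp (-c * t)) (Icc a b) t := by
    intro t ht
    have he : HasDerivAt (fun t : ℝ => Real.exp (-c * t)) (Real.exp (-c * t) * (-c)) t := by
      simpa using ((hasDerivAt_id t).const_mul (-c)).exp
    have := (hf t ht).mul he.hasDerivWithinAt
    exact this.congr_deriv (by ring)
  have hanti : AntitoneOn g (Icc a b) := by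
    apply antitoneOn_of_deriv_nonpos (convex_Icc a b)
    · exact fun t ht => (hgd t ht).continuousWithinAt
    · intro t ht
      rw [interior_Icc] at ht
      exact ((hgd t (Ioo_subset_Icc_self ht)).hasDerivAt
        (Icc_mem_nhds ht.1 ht.2)).differentiableAt.differentiableWithinAt
    · intro t ht
      rw [interior_Icc] at ht
      rw [((hgd t (Ioo_subset_Icc_self ht)).hasDerivAt (Icc_mem_nhds ht.1 ht.2)).deriv]
      have h1 := hd t ht
      have h2 := Real.exp_pos (-c * t)
      nlinarith
  have h := hanti (left_mem_Icc.2 hab) (right_mem_Icc.2 hab) hab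
  have h2 := mul_le_mul_of_nonneg_right h (Real.exp_pos (c * b)).le
  calc f b = f b * Real.exp (-c * b) * Real.exp (c * b) := by
        rw [mul_assoc, ← Real.exp_add]; simp
    _ ≤ f a * Real.exp (-c * a) * Real.exp (c * b) := h2
    _ = f a * Real.exp (c * (b - a)) := by
        rw [mul_assoc, ← Real.exp_add]; ring_nf

/-- If `f' ≥ c f` on the interior, then `f b ≥ f a * exp (c (b-a))`. -/
lemma RM.deriv_ineq_ge {f d : ℝ → ℝ} {a b c : ℝ} (hab : a ≤ b)
    (hf : ∀ t ∈ Icc a b, HasDerivWithinAt f (d t) (Icc a b) t)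
    (hd : ∀ t ∈ Ioo a b, c * f t ≤ d t) :
    f a * Real.exp (c * (b - a)) ≤ f b := by
  have := RM.deriv_ineq_le (f := fun t => -f t) (d := fun t => -d t) (c := c) hab
    (fun t ht => (hf t ht).neg) (fun t ht => by have := hd t ht; simp; linarith)
  simp only [neg_mul, neg_le_neg_iff] at this
  nlinarith [this, Real.exp_pos (c * (b - a))]

/-- If `f' ≤ c` on the interior, then `f b ≤ f a + c (b-a)`. -/
lemma RM.deriv_const_le {f d : ℝ → ℝ} {a b c : ℝ} (hab : a ≤ b)
    (hf : ∀ t ∈ Icc a b, HasDerivWithinAt f (d t) (Icc a b) t)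
    (hd : ∀ t ∈ Ioo a b, d t ≤ c) :
    f b ≤ f a + c * (b - a) := by
  set g : ℝ → ℝ := fun t => f t - c * t with hg
  have hgd : ∀ t ∈ Icc a b, HasDerivWithinAt g (d t - c) (Icc a b) t := by
    intro t ht
    have : HasDerivWithinAt (fun t : ℝ => c * t) (c * 1) (Icc a b) t :=
      ((hasDerivAt_id t).const_mul c).hasDerivWithinAt
    exact ((hf t ht).sub this).congr_deriv (by ring)
  have hanti : AntitoneOn g (Icc a b) := by
    apply antitoneOn_of_deriv_nonpos (convex_Icc a b)
    · exact fun t ht => (hgd t ht).continuousWithinAt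
    · intro t ht
      rw [interior_Icc] at ht
      exact ((hgd t (Ioo_subset_Icc_self ht)).hasDerivAt
        (Icc_mem_nhds ht.1 ht.2)).differentiableAt.differentiableWithinAt
    · intro t ht
      rw [interior_Icc] at ht
      rw [((hgd t (Ioo_subset_Icc_self ht)).hasDerivAt (Icc_mem_nhds ht.1 ht.2)).deriv]
      have := hd t ht; linarith
  have h := hanti (left_mem_Icc.2 hab) (right_mem_Icc.2 hab) hab
  simp only [hg] at h
  linarith

/-- barrier lemma: if the derivative is ≥ ρ > 0 whenever f ≤ A, and f a ≥ A,
then f stays ≥ A on [a,b]. -/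
lemma RM.stay_ge {f d : ℝ → ℝ} {a b A ρ : ℝ} (hρ : 0 < ρ)
    (hf : ∀ t ∈ Icc a b, HasDerivWithinAt f (d t) (Icc a b) t)
    (hd : ∀ t ∈ Icc a b, f t ≤ A → ρ ≤ d t)
    (ha : A ≤ f a) : ∀ t ∈ Icc a b, A ≤ f t := by
  intro t ht
  by_contra hcon
  push_neg at hcon
  have hat : a ≤ t := ht.1
  have hcont : ContinuousOn f (Icc a b) := fun τ hτ => (hf τ hτ).continuousWithinAt
  set S : Set ℝ := {τ ∈ Icc a t | A ≤ f τ} with hS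
  have hSsub : S ⊆ Icc a t := fun τ hτ => hτ.1
  have hSc : IsClosed S :=
    ContinuousOn.preimage_isClosed_of_isClosed
      (hcont.mono (Icc_subset_Icc le_rfl ht.2)) isClosed_Icc isClosed_Ici
  have hScomp : IsCompact S := isCompact_Icc.of_isClosed_subset hSc hSsub
  have haS : a ∈ S := ⟨⟨le_rfl, hat⟩, ha⟩
  set q := sSup S with hq
  have hqS : q ∈ S := hScomp.sSup_mem ⟨a, haS⟩
  have hq_icc : q ∈ Icc a t := hqS.1
  have hfq_ge : A ≤ f q := hqS.2
  have hqt : q < t := lt_of_le_of_ne hq_icc.2 (by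
    intro h; rw [h] at hfq_ge; linarith)
  have hbddS : BddAbove S := ⟨t, fun τ hτ => hτ.1.2⟩
  have hafter : ∀ τ, q < τ → τ ≤ t → f τ < A := by
    intro τ h1 h2
    by_contra h
    push_neg at h
    exact absurd (le_csSup hbddS ⟨⟨le_trans hq_icc.1 h1.le, h2⟩, h⟩) (not_le.2 h1)
  have hqmem : q ∈ Icc a b := ⟨hq_icc.1, le_trans hq_icc.2 ht.2⟩
  have hsub2 : Ioc q t ⊆ Icc a b :=
    fun τ hτ => ⟨le_trans hq_icc.1 hτ.1.le, le_trans hτ.2 ht.2⟩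
  haveI hne : (𝓝[Ioc q t] q).NeBot := by
    apply mem_closure_iff_nhdsWithin_neBot.1
    rw [closure_Ioc hqt.ne]
    exact ⟨le_rfl, hqt.le⟩
  have hfq_le : f q ≤ A := by
    have htends : Tendsto f (𝓝[Ioc q t] q) (𝓝 (f q)) :=
      (hcont q hqmem).mono_left (nhdsWithin_mono q hsub2)
    refine le_of_tendsto htends ?_
    filter_upwards [eventually_mem_nhdsWithin] with τ hτ
    exact (hafter τ hτ.1 hτ.2).le
  have hder := hf q hqmem
  have hdq : ρ ≤ d q := hd q hqmem hfq_le
  rw [hasDerivWithinAt_iff_tendsto_slope] at hder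
  have hsub3 : Ioc q t ⊆ Icc a b \ {q} :=
    fun τ hτ => ⟨hsub2 hτ, by simp [hτ.1.ne']⟩
  have hder2 : Tendsto (slope f q) (𝓝[Ioc q t] q) (𝓝 (d q)) :=
    hder.mono_left (nhdsWithin_mono q hsub3)
  have hev : ∀ᶠ τ in 𝓝[Ioc q t] q, 0 < slope f q τ :=
    hder2.eventually (eventually_gt_nhds (by linarith))
  obtain ⟨τ, hτpos, hτmem⟩ := (hev.and eventually_mem_nhdsWithin).exists
  have hτq : 0 < τ - q := sub_pos.2 hτmem.1
  rw [slope_def_field] at hτpos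
  have h5 := mul_pos hτpos hτq
  rw [div_mul_cancel₀ _ (ne_of_gt hτq)] at h5
  exact absurd (hafter τ hτmem.1 hτmem.2) (by linarith)

/-- barrier lemma (upper): if the derivative is ≤ -ρ < 0 whenever f ≥ A, and f a ≤ A,
then f stays ≤ A on [a,b]. -/
lemma RM.stay_le {f d : ℝ → ℝ} {a b A ρ : ℝ} (hρ : 0 < ρ)
    (hf : ∀ t ∈ Icc a b, HasDerivWithinAt f (d t) (Icc a b) t)
    (hd : ∀ t ∈ Icc a b, A ≤ f t → d t ≤ -ρ)
    (ha : f a ≤ A) : ∀ t ∈ Icc a b, f t ≤ A := by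
  intro t ht
  have := RM.stay_ge (f := fun τ => -f τ) (d := fun τ => -d τ) (A := -A) (ρ := ρ) hρ
    (fun τ hτ => (hf τ hτ).neg)
    (fun τ hτ h => by
      have h' : -f τ ≤ -A := h
      have := hd τ hτ (by linarith)
      show ρ ≤ -d τ
      linarith)
    (by show -A ≤ -f a; linarith) t ht
  have h2 : -A ≤ -f t := this
  linarith

/-- last crossing from above: if f a ≥ A > f t, there is a last time r where f r = A,
with f < A strictly afterwards. -/
lemma RM.last_ge {f : ℝ → ℝ} {a t A : ℝ} (hcont : ContinuousOn f (Icc a t))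
    (hat : a ≤ t) (hfa : A ≤ f a) (hft : f t < A) :
    ∃ r, a ≤ r ∧ r < t ∧ f r = A ∧ ∀ τ, r < τ → τ ≤ t → f τ < A := by
  set S : Set ℝ := {τ ∈ Icc a t | A ≤ f τ} with hS
  have hSsub : S ⊆ Icc a t := fun τ hτ => hτ.1
  have hSc : IsClosed S :=
    ContinuousOn.preimage_isClosed_of_isClosed hcont isClosed_Icc isClosed_Ici
  have hScomp : IsCompact S := isCompact_Icc.of_isClosed_subset hSc hSsub
  have haS : a ∈ S := ⟨⟨le_rfl, hat⟩, hfa⟩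
  set q := sSup S with hq
  have hqS : q ∈ S := hScomp.sSup_mem ⟨a, haS⟩
  have hq_icc : q ∈ Icc a t := hqS.1
  have hfq_ge : A ≤ f q := hqS.2
  have hqt : q < t := lt_of_le_of_ne hq_icc.2 (by intro h; rw [h] at hfq_ge; linarith)
  have hbddS : BddAbove S := ⟨t, fun τ hτ => hτ.1.2⟩
  have hafter : ∀ τ, q < τ → τ ≤ t → f τ < A := by
    intro τ h1 h2
    by_contra h
    push_neg at h
    exact absurd (le_csSup hbddS ⟨⟨le_trans hq_icc.1 h1.le, h2⟩, h⟩) (not_le.2 h1)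
  haveI hne : (𝓝[Ioc q t] q).NeBot := by
    apply mem_closure_iff_nhdsWithin_neBot.1
    rw [closure_Ioc hqt.ne]
    exact ⟨le_rfl, hqt.le⟩
  have hfq_le : f q ≤ A := by
    have htends : Tendsto f (𝓝[Ioc q t] q) (𝓝 (f q)) :=
      (hcont q hq_icc).mono_left (nhdsWithin_mono q
        (fun τ hτ => ⟨le_trans hq_icc.1 hτ.1.le, hτ.2⟩))
    refine le_of_tendsto htends ?_
    filter_upwards [eventually_mem_nhdsWithin] with τ hτ
    exact (hafter τ hτ.1 hτ.2).le
  exact ⟨q, hq_icc.1, hqt, le_antisymm hfq_le hfq_ge, hafter⟩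

/-- first crossing from below: if f a < A ≤ f t, there is a first time m where f m = A,
with f < A strictly before. -/
lemma RM.first_ge {f : ℝ → ℝ} {a t A : ℝ} (hcont : ContinuousOn f (Icc a t))
    (hat : a ≤ t) (hfa : f a < A) (hft : A ≤ f t) :
    ∃ m, a < m ∧ m ≤ t ∧ f m = A ∧ ∀ τ, a ≤ τ → τ < m → f τ < A := by
  set S : Set ℝ := {τ ∈ Icc a t | A ≤ f τ} with hS
  have hSsub : S ⊆ Icc a t := fun τ hτ => hτ.1
  have hSc : IsClosed S :=
    ContinuousOn.preimage_isClosed_of_isClosed hcont isClosed_Icc isClosed_Ici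
  have hScomp : IsCompact S := isCompact_Icc.of_isClosed_subset hSc hSsub
  have htS : t ∈ S := ⟨⟨hat, le_rfl⟩, hft⟩
  set q := sInf S with hq
  have hqS : q ∈ S := hScomp.sInf_mem ⟨t, htS⟩
  have hq_icc : q ∈ Icc a t := hqS.1
  have hfq_ge : A ≤ f q := hqS.2
  have haq : a < q := lt_of_le_of_ne hq_icc.1 (by intro h; rw [← h] at hfq_ge; linarith)
  have hbddS : BddBelow S := ⟨a, fun τ hτ => hτ.1.1⟩
  have hbefore : ∀ τ, a ≤ τ → τ < q → f τ < A := by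
    intro τ h1 h2
    by_contra h
    push_neg at h
    exact absurd (csInf_le hbddS ⟨⟨h1, le_trans h2.le hq_icc.2⟩, h⟩) (not_le.2 h2)
  haveI hne : (𝓝[Ico a q] q).NeBot := by
    apply mem_closure_iff_nhdsWithin_neBot.1
    rw [closure_Ico (ne_of_lt haq)]
    exact ⟨haq.le, le_rfl⟩
  have hfq_le : f q ≤ A := by
    have htends : Tendsto f (𝓝[Ico a q] q) (𝓝 (f q)) :=
      (hcont q hq_icc).mono_left (nhdsWithin_mono q
        (fun τ hτ => ⟨hτ.1, le_trans hτ.2.le hq_icc.2⟩))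
    refine le_of_tendsto htends ?_
    filter_upwards [eventually_mem_nhdsWithin] with τ hτ
    exact (hbefore τ hτ.1 hτ.2).le
  exact ⟨q, haq, hq_icc.2, le_antisymm hfq_le hfq_ge, hbefore⟩

/-- first crossing from above: if f a > A ≥ f t, there is a first time m where f m = A,
with f > A strictly before. -/
lemma RM.first_le {f : ℝ → ℝ} {a t A : ℝ} (hcont : ContinuousOn f (Icc a t))
    (hat : a ≤ t) (hfa : A < f a) (hft : f t ≤ A) :
    ∃ m, a < m ∧ m ≤ t ∧ f m = A ∧ ∀ τ, a ≤ τ → τ < m → A < f τ := by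
  obtain ⟨m, h1, h2, h3, h4⟩ := RM.first_ge (f := fun τ => -f τ) (A := -A)
    (hcont.neg) hat (by show -f a < -A; linarith) (by show -A ≤ -f t; linarith)
  refine ⟨m, h1, h2, by have h3' : -f m = -A := h3; linarith, fun τ ha hm => ?_⟩
  have h' : -f τ < -A := h4 τ ha hm
  linarith

section RMfacts
variable {α β γ : ℝ}

/-- V decays at rate 1/2 when βU ≤ 1/2. -/
lemma RM.fact_decayV {u v : ℝ} (hβ : 0 < β) (hu : 0 < u) (huc : β*u ≤ 1/2) (hv : 0 < v) :
    -v + β*u*v/(1+u) ≤ -(1/2) * v := by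
  have h1 : β*u*v/(1+u) ≤ β*u*v := div_le_self (by positivity) (by linarith)
  nlinarith

/-- V grows at rate η/2 when U ≥ u₀. -/
lemma RM.fact_growV {η u v u₀ : ℝ} (hβ : 0 < β) (hu₀ : 0 < u₀) (hu : u₀ ≤ u) (hv : 0 < v)
    (key : β*u₀ = (1+η/2)*(1+u₀)) (hη : 0 < η) :
    (η/2) * v ≤ -v + β*u*v/(1+u)  := by
  have hu1 : (0:ℝ) < 1 + u := by linarith
  have hu₀1 : (0:ℝ) < 1 + u₀ := by linarith
  have h2 : (1+η/2)*(1+u) ≤ β*u := by nlinarith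
  have h3 : -v + β*u*v/(1+u) - (η/2)*v = ((β*u - (1+η/2)*(1+u))*v)/(1+u) := by
    field_simp; ring
  have h4 : 0 ≤ ((β*u - (1+η/2)*(1+u))*v)/(1+u) :=
    div_nonneg (mul_nonneg (by linarith) hv.le) hu1.le
  linarith

/-- V decays at rate at most 1 always. -/
lemma RM.fact_lbV {u v : ℝ} (hβ : 0 < β) (hu : 0 < u) (hv : 0 < v) :
    (-1) * v ≤ -v + β*u*v/(1+u) := by
  have : 0 ≤ β*u*v/(1+u) := by positivity
  linarith

/-- U grows at rate δ when U ≤ u₀ and V ≤ δ, where δ = α(γ-u₀)/2. -/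
lemma RM.fact_growU {u v u₀ δ : ℝ} (hα : 0 < α) (hu : 0 < u) (huu₀ : u ≤ u₀) (hv : 0 < v)
    (hvδ : v ≤ δ) (hδ : δ = α*(γ-u₀)/2) (hu₀γ : u₀ < γ) :
    δ * u ≤ α*u*(γ-u) - u*v/(1+u) := by
  have h1 : u*v/(1+u) ≤ u*v := div_le_self (by positivity) (by linarith)
  have h2 : u*v ≤ u*δ := mul_le_mul_of_nonneg_left hvδ hu.le
  have h3 : 0 ≤ α*u*(u₀-u) := mul_nonneg (mul_pos hα hu).le (by linarith)
  have h4 : α*u*(γ-u₀) = 2*(δ*u) := by rw [hδ]; ring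
  nlinarith [h1, h2, h3, h4]

/-- U decays at rate at most M = αK₁+K₂ when U ≤ K₁, V ≤ K₂. -/
lemma RM.fact_lbU {u v K₁ K₂ : ℝ} (hα : 0 < α) (hγ : 0 < γ) (hu : 0 < u) (huK : u ≤ K₁)
    (hv : 0 < v) (hvK : v ≤ K₂) :
    (-(α*K₁+K₂)) * u ≤ α*u*(γ-u) - u*v/(1+u) := by
  have h1 : u*v/(1+u) ≤ u*v := div_le_self (by positivity) (by linarith)
  have h2 : u*v ≤ u*K₂ := mul_le_mul_of_nonneg_left hvK hu.le
  have h3 : 0 ≤ α*u*(γ-u+K₁) := mul_nonneg (mul_pos hα hu).le (by linarith)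
  nlinarith [h1, h2, h3]

/-- U decreases fast above K₁ = γ+1. -/
lemma RM.fact_dissU {u v : ℝ} (hα : 0 < α) (hγ : 0 < γ) (hu' : γ + 1 ≤ u) (hv : 0 < v) :
    α*u*(γ-u) - u*v/(1+u) ≤ -(α*(γ+1)) := by
  have hu : (0:ℝ) < u := by linarith
  have h1 : 0 ≤ u*v/(1+u) := by positivity
  have h3 : α*u*(γ-u+1) ≤ 0 := mul_nonpos_of_nonneg_of_nonpos (mul_pos hα hu).le (by linarith)
  have h4 : α*(γ+1) ≤ α*u := mul_le_mul_of_nonneg_left hu' hα.le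
  nlinarith [h1, h3, h4]

end RMfacts
section RMpos
variable {α β γ : ℝ}

/-- The derivative-bridge: restrict solution derivatives to compact subintervals. -/
lemma RM.bridgeU {U V : ℝ → ℝ}
    (hsol : ∀ t : ℝ, 0 ≤ t →
      HasDerivWithinAt U (α * U t * (γ - U t) - U t * V t / (1 + U t)) (Set.Ici 0) t ∧
      HasDerivWithinAt V (-(V t) + β * U t * V t / (1 + U t)) (Set.Ici 0) t)
    {a b : ℝ} (ha : 0 ≤ a) :
    ∀ t ∈ Icc a b, HasDerivWithinAt U
      (α * U t * (γ - U t) - U t * V t / (1 + U t)) (Icc a b) t :=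
  fun t ht => ((hsol t (le_trans ha ht.1)).1).mono (fun x hx => le_trans ha hx.1)

lemma RM.bridgeV {U V : ℝ → ℝ}
    (hsol : ∀ t : ℝ, 0 ≤ t →
      HasDerivWithinAt U (α * U t * (γ - U t) - U t * V t / (1 + U t)) (Set.Ici 0) t ∧
      HasDerivWithinAt V (-(V t) + β * U t * V t / (1 + U t)) (Set.Ici 0) t)
    {a b : ℝ} (ha : 0 ≤ a) :
    ∀ t ∈ Icc a b, HasDerivWithinAt V
      (-(V t) + β * U t * V t / (1 + U t)) (Icc a b) t :=
  fun t ht => ((hsol t (le_trans ha ht.1)).2).mono (fun x hx => le_trans ha hx.1)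

lemma RM.contU {U V : ℝ → ℝ}
    (hsol : ∀ t : ℝ, 0 ≤ t →
      HasDerivWithinAt U (α * U t * (γ - U t) - U t * V t / (1 + U t)) (Set.Ici 0) t ∧
      HasDerivWithinAt V (-(V t) + β * U t * V t / (1 + U t)) (Set.Ici 0) t)
    {a b : ℝ} (ha : 0 ≤ a) : ContinuousOn U (Icc a b) :=
  fun t ht => (RM.bridgeU hsol ha t ht).continuousWithinAt

lemma RM.contV {U V : ℝ → ℝ}
    (hsol : ∀ t : ℝ, 0 ≤ t →
      HasDerivWithinAt U (α * U t * (γ - U t) - U t * V t / (1 + U t)) (Set.Ici 0) t ∧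
      HasDerivWithinAt V (-(V t) + β * U t * V t / (1 + U t)) (Set.Ici 0) t)
    {a b : ℝ} (ha : 0 ≤ a) : ContinuousOn V (Icc a b) :=
  fun t ht => (RM.bridgeV hsol ha t ht).continuousWithinAt

/-- Positivity of U. -/
lemma RM.posU (hα : 0 < α) (hβ : 1 < β) (hγ : 0 < γ) {U V : ℝ → ℝ}
    (hsol : ∀ t : ℝ, 0 ≤ t →
      HasDerivWithinAt U (α * U t * (γ - U t) - U t * V t / (1 + U t)) (Set.Ici 0) t ∧
      HasDerivWithinAt V (-(V t) + β * U t * V t / (1 + U t)) (Set.Ici 0) t)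
    (hU0 : 0 < U 0) : ∀ t, 0 ≤ t → 0 < U t := by
  by_contra hc
  push_neg at hc
  obtain ⟨s, hs0, hsU⟩ := hc
  obtain ⟨m, hm0, hms, hUm, hbefore⟩ :=
    RM.first_le (RM.contU hsol le_rfl) hs0 hU0 hsU
  have hm0' : (0:ℝ) ≤ m := hm0.le
  -- bounds for U and V on [0, m]
  obtain ⟨B1, hB1⟩ := isCompact_Icc.exists_bound_of_continuousOn
    (RM.contU (b := m) hsol le_rfl)
  obtain ⟨B2, hB2⟩ := isCompact_Icc.exists_bound_of_continuousOn
    (RM.contV (b := m) hsol le_rfl)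
  have hB2nn : 0 ≤ B2 := le_trans (norm_nonneg _) (hB2 0 ⟨le_rfl, hm0'⟩)
  set c : ℝ := -(α*B1 + B2) with hc_def
  have hkey : ∀ τ ∈ Ioo 0 m, c * U τ ≤ α * U τ * (γ - U τ) - U τ * V τ / (1 + U τ) := by
    intro τ hτ
    have hUτ : 0 < U τ := hbefore τ hτ.1.le hτ.2
    have hfac : c ≤ α * (γ - U τ) - V τ / (1 + U τ) := by
      have h1 : U τ ≤ B1 := le_trans (le_abs_self _) (hB1 τ ⟨hτ.1.le, hτ.2.le⟩)
      have h2 : V τ / (1 + U τ) ≤ B2 := by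
        rcases le_or_gt (V τ) 0 with h | h
        · exact le_trans (div_nonpos_of_nonpos_of_nonneg h (by linarith)) hB2nn
        · calc V τ / (1 + U τ) ≤ V τ := div_le_self h.le (by linarith)
            _ ≤ B2 := le_trans (le_abs_self _) (hB2 τ ⟨hτ.1.le, hτ.2.le⟩)
      have h3 : -(α * U τ) ≤ α * (γ - U τ) := by nlinarith
      have h4 : α * U τ ≤ α * B1 := by nlinarith
      rw [hc_def]; linarith
    calc c * U τ = U τ * c := by ring
      _ ≤ U τ * (α * (γ - U τ) - V τ / (1 + U τ)) :=
          mul_le_mul_of_nonneg_left hfac hUτ.le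
      _ = α * U τ * (γ - U τ) - U τ * V τ / (1 + U τ) := by ring
  have := RM.deriv_ineq_ge (c := c) hm0' (RM.bridgeU hsol le_rfl) hkey
  rw [hUm] at this
  nlinarith [Real.exp_pos (c * (m - 0)), this, hU0]

/-- Positivity of V. -/
lemma RM.posV (hα : 0 < α) (hβ : 1 < β) (hγ : 0 < γ) {U V : ℝ → ℝ}
    (hsol : ∀ t : ℝ, 0 ≤ t →
      HasDerivWithinAt U (α * U t * (γ - U t) - U t * V t / (1 + U t)) (Set.Ici 0) t ∧
      HasDerivWithinAt V (-(V t) + β * U t * V t / (1 + U t)) (Set.Ici 0) t)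
    (hU0 : 0 < U 0) (hV0 : 0 < V 0) : ∀ t, 0 ≤ t → 0 < V t := by
  have hUpos := RM.posU hα hβ hγ hsol hU0
  by_contra hc
  push_neg at hc
  obtain ⟨s, hs0, hsV⟩ := hc
  obtain ⟨m, hm0, hms, hVm, hbefore⟩ :=
    RM.first_le (RM.contV hsol le_rfl) hs0 hV0 hsV
  have hm0' : (0:ℝ) ≤ m := hm0.le
  have hkey : ∀ τ ∈ Ioo 0 m, (-1) * V τ ≤ -(V τ) + β * U τ * V τ / (1 + U τ) := by
    intro τ hτ
    exact RM.fact_lbV (by linarith) (hUpos τ hτ.1.le) (hbefore τ hτ.1.le hτ.2)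
  have := RM.deriv_ineq_ge (c := -1) hm0' (RM.bridgeV hsol le_rfl) hkey
  rw [hVm] at this
  nlinarith [Real.exp_pos ((-1) * (m - 0)), this, hV0]

end RMpos
section RMbounds
variable {α β γ : ℝ}

/-- Eventual upper bounds (dissipativity). -/
lemma RM.bounds (hα : 0 < α) (hβ : 1 < β) (hγ : 0 < γ) {U V : ℝ → ℝ}
    (hsol : ∀ t : ℝ, 0 ≤ t →
      HasDerivWithinAt U (α * U t * (γ - U t) - U t * V t / (1 + U t)) (Set.Ici 0) t ∧
      HasDerivWithinAt V (-(V t) + β * U t * V t / (1 + U t)) (Set.Ici 0) t)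
    (hU0 : 0 < U 0) (hV0 : 0 < V 0) {K₁ C K₂ δ : ℝ}
    (hK₁ : K₁ = γ + 1) (hC : C = α*β*γ*K₁ + β*K₁) (hK₂ : K₂ = C + 1 + δ) (hδ : 0 ≤ δ) :
    ∃ t₂ : ℝ, 1 ≤ t₂ ∧ ∀ τ, t₂ ≤ τ → U τ ≤ K₁ ∧ V τ ≤ K₂ := by
  have hUpos := RM.posU hα hβ hγ hsol hU0
  have hVpos := RM.posV hα hβ hγ hsol hU0 hV0
  have hβ0 : (0:ℝ) < β := by linarith
  have hK₁pos : 0 < K₁ := by rw [hK₁]; linarith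
  have hαK₁ : 0 < α * K₁ := by positivity
  have hCpos : 0 < C := by rw [hC]; positivity
  -- step 1 : reach U ≤ K₁
  have hdiss : ∀ τ : ℝ, 0 ≤ τ → K₁ ≤ U τ →
      α * U τ * (γ - U τ) - U τ * V τ / (1 + U τ) ≤ -(α*K₁) := by
    intro τ hτ h
    rw [hK₁] at h ⊢
    exact RM.fact_dissU hα hγ h (hVpos τ hτ)
  have hreachU : ∃ s, 1 ≤ s ∧ U s ≤ K₁ := by
    by_contra h
    push_neg at h
    set T : ℝ := 1 + U 1 / (α*K₁) with hT_def
    have hU1 : K₁ < U 1 := h 1 le_rfl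
    have hT1 : (1:ℝ) ≤ T := by
      rw [hT_def]
      have : 0 < U 1 / (α*K₁) := div_pos (by linarith) hαK₁
      linarith
    have hlin := RM.deriv_const_le (c := -(α*K₁)) hT1
      (RM.bridgeU hsol zero_le_one)
      (fun τ hτ => hdiss τ (by linarith [hτ.1]) (h τ hτ.1.le).le)
    have hcanc : α*K₁ * (U 1 / (α*K₁)) = U 1 := mul_div_cancel₀ _ (ne_of_gt hαK₁)
    have hUT : K₁ < U T := h T hT1
    rw [hT_def] at hlin
    nlinarith [hlin, hUT, hK₁pos, hcanc]
  obtain ⟨s, hs1, hsU⟩ := hreachU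
  have hs0 : (0:ℝ) ≤ s := by linarith
  have hUbd : ∀ τ, s ≤ τ → U τ ≤ K₁ := by
    intro τ hτ
    exact RM.stay_le hαK₁ (RM.bridgeU hsol hs0)
      (fun τ' hτ' hge => hdiss τ' (by linarith [hτ'.1]) hge) hsU τ ⟨hτ, le_rfl⟩
  -- step 2 : the function W = βU + V
  set W : ℝ → ℝ := fun t => β * U t + V t with hW_def
  set dW : ℝ → ℝ := fun t => β * (α * U t * (γ - U t) - U t * V t / (1 + U t)) +
      (-(V t) + β * U t * V t / (1 + U t)) with hdW_def
  have bridgeW : ∀ a b : ℝ, 0 ≤ a → ∀ t ∈ Icc a b, HasDerivWithinAt W (dW t) (Icc a b) t :=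
    fun a b ha t ht => ((RM.bridgeU hsol ha t ht).const_mul β).add (RM.bridgeV hsol ha t ht)
  have keyW : ∀ τ, s ≤ τ → C + 1 ≤ W τ → dW τ ≤ -1 := by
    intro τ hτ hge
    have hu := hUpos τ (by linarith)
    have hv := hVpos τ (by linarith)
    have huK := hUbd τ hτ
    have hid : dW τ = α*β*(U τ*(γ-U τ)) - V τ := by rw [hdW_def]; ring
    have h' : U τ*(γ-U τ) ≤ γ*K₁ := by nlinarith [sq_nonneg (U τ - γ), hu, hK₁pos, hγ]
    have h'' : α*β*(U τ*(γ-U τ)) ≤ α*β*(γ*K₁) :=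
      mul_le_mul_of_nonneg_left h' (by positivity)
    have hβU : β * U τ ≤ β * K₁ := mul_le_mul_of_nonneg_left huK hβ0.le
    have hvge : C + 1 - β*K₁ ≤ V τ := by
      have : W τ = β * U τ + V τ := rfl
      linarith [hge, hβU, this]
    have e : α*β*(γ*K₁) = α*β*γ*K₁ := by ring
    rw [hid]
    linarith [hC.le, hC.ge, h'', hvge, e]
  have hreachW : ∃ s₂, s ≤ s₂ ∧ W s₂ ≤ C + 1 := by
    by_contra h
    push_neg at h
    have hWs : C + 1 < W s := h s le_rfl
    set T : ℝ := s + W s with hT_def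
    have hT1 : s ≤ T := by rw [hT_def]; linarith
    have hlin := RM.deriv_const_le (c := -1) hT1 (bridgeW s T hs0)
      (fun τ hτ => keyW τ hτ.1.le (h τ hτ.1.le).le)
    have hWT : C + 1 < W T := h T hT1
    rw [hT_def] at hlin
    nlinarith [hlin, hWT, hCpos, hWs]
  obtain ⟨s₂, hs₂s, hs₂W⟩ := hreachW
  have hs₂0 : (0:ℝ) ≤ s₂ := by linarith
  have hWbd : ∀ τ, s₂ ≤ τ → W τ ≤ C + 1 := by
    intro τ hτ
    exact RM.stay_le one_pos (bridgeW s₂ τ hs₂0)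
      (fun τ' hτ' hge => keyW τ' (by linarith [hτ'.1]) hge) hs₂W τ ⟨hτ, le_rfl⟩
  refine ⟨max s₂ 1, le_max_right _ _, fun τ hτ => ?_⟩
  have hτs₂ : s₂ ≤ τ := le_trans (le_max_left _ _) hτ
  have hτs : s ≤ τ := by linarith
  have hu := hUpos τ (by linarith)
  have hW := hWbd τ hτs₂
  have hWτ : W τ = β * U τ + V τ := rfl
  refine ⟨hUbd τ hτs, ?_⟩
  rw [hK₂]
  nlinarith [hW, hWτ, hu, hβ0, hδ]
end RMbounds
/-- From exponential decay reaching level d, bound the elapsed time. -/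
lemma RM.time_bound {x K d : ℝ} (hd : 0 < d) (hK : 0 < K)
    (h : d ≤ K * Real.exp (-(1/2)*x)) : x ≤ 2*Real.log (K/d) := by
  have emul : Real.exp (-(1/2)*x) * Real.exp ((1/2)*x) = 1 := by
    rw [← Real.exp_add]; norm_num
  have t1 := mul_le_mul_of_nonneg_right h (Real.exp_pos ((1/2)*x)).le
  have e1 : d * Real.exp ((1/2)*x) ≤ K := by
    have e0 : K * Real.exp (-(1/2)*x) * Real.exp ((1/2)*x) = K := by
      rw [mul_assoc, emul, mul_one]
    linarith [t1, e0]
  have e2 : Real.exp ((1/2)*x) ≤ K/d := by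
    rw [le_div_iff₀ hd]
    linarith [e1]
  have e3 := (Real.log_le_log_iff (Real.exp_pos _) (by positivity)).2 e2
  rw [Real.log_exp] at e3
  linarith

/-- Any positive level b is exceeded after growth by factor exp (max 0 (log (b/a)) + 1). -/
lemma RM.exp_reach {a b : ℝ} (ha : 0 < a) (hb : 0 < b) :
    b < a * Real.exp (max 0 (Real.log (b/a)) + 1) := by
  have h1 : Real.log (b/a) < max 0 (Real.log (b/a)) + 1 :=
    lt_of_le_of_lt (le_max_right _ _) (lt_add_one _)
  have h2 : b/a < Real.exp (max 0 (Real.log (b/a)) + 1) := by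
    calc b/a = Real.exp (Real.log (b/a)) := (Real.exp_log (by positivity)).symm
      _ < _ := Real.exp_lt_exp.2 h1
  calc b = a * (b/a) := by field_simp
    _ < a * Real.exp (max 0 (Real.log (b/a)) + 1) := by
        exact mul_lt_mul_of_pos_left h2 ha
section RMpersist
variable {α β γ : ℝ}

/-- Uniform persistence of the prey. -/
lemma RM.persistU (hα : 0 < α) (hβ : 1 < β) (hγ : 0 < γ) {U V : ℝ → ℝ}
    (hsol : ∀ t : ℝ, 0 ≤ t →
      HasDerivWithinAt U (α * U t * (γ - U t) - U t * V t / (1 + U t)) (Set.Ici 0) t ∧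
      HasDerivWithinAt V (-(V t) + β * U t * V t / (1 + U t)) (Set.Ici 0) t)
    (hU0 : 0 < U 0) (hV0 : 0 < V 0) {u₀ δ Uc K₁ C K₂ M T₂ ΘU : ℝ}
    (hu₀pos : 0 < u₀) (hu₀γ : u₀ < γ)
    (hδ : δ = α*(γ-u₀)/2) (hδpos : 0 < δ)
    (hUc : Uc = min (1/(2*β)) u₀) (hUcpos : 0 < Uc)
    (hK₁ : K₁ = γ + 1) (hC : C = α*β*γ*K₁ + β*K₁) (hK₂ : K₂ = C + 1 + δ)
    (hM : M = α*K₁ + K₂) (hT₂ : T₂ = 2*Real.log (K₂/δ))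
    (hΘU : ΘU = Uc * Real.exp (-(M*T₂))) :
    ∃ s₀ : ℝ, 1 ≤ s₀ ∧ ∀ t, s₀ ≤ t → ΘU ≤ U t := by
  have hβ0 : (0:ℝ) < β := by linarith
  have hUpos := RM.posU hα hβ hγ hsol hU0
  have hVpos := RM.posV hα hβ hγ hsol hU0 hV0
  obtain ⟨t₂, ht₂1, hbd⟩ := RM.bounds hα hβ hγ hsol hU0 hV0 hK₁ hC hK₂ hδpos.le
  have ht₂0 : (0:ℝ) ≤ t₂ := by linarith
  have hUcu₀ : Uc ≤ u₀ := by rw [hUc]; exact min_le_right _ _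
  have hUcβ : β * Uc ≤ 1/2 := by
    rw [hUc]
    calc β * min (1/(2*β)) u₀ ≤ β * (1/(2*β)) :=
          mul_le_mul_of_nonneg_left (min_le_left _ _) hβ0.le
      _ = 1/2 := by field_simp
  have hK₁pos : 0 < K₁ := by rw [hK₁]; linarith
  have hCpos : 0 < C := by rw [hC]; positivity
  have hK₂pos : 0 < K₂ := by rw [hK₂]; linarith
  have hK₂δ : δ < K₂ := by rw [hK₂]; linarith
  have hMpos : 0 < M := by rw [hM]; positivity
  have hT₂pos : 0 < T₂ := by
    rw [hT₂]
    have := Real.log_pos ((one_lt_div hδpos).2 hK₂δ)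
    linarith
  have hΘUpos : 0 < ΘU := by rw [hΘU]; positivity
  have hΘU_lt_Uc : ΘU < Uc := by
    rw [hΘU]
    have h := Real.exp_lt_one_iff.2 (show -(M*T₂) < 0 by nlinarith only [hMpos, hT₂pos])
    have := mul_lt_mul_of_pos_left h hUcpos
    simpa using this
  -- pointwise derivative bounds
  have decayV : ∀ τ, 0 ≤ τ → U τ ≤ Uc →
      -(V τ) + β * U τ * V τ / (1 + U τ) ≤ -(1/2) * V τ := by
    intro τ hτ h
    refine RM.fact_decayV hβ0 (hUpos τ hτ) ?_ (hVpos τ hτ)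
    calc β * U τ ≤ β * Uc := mul_le_mul_of_nonneg_left h hβ0.le
      _ ≤ 1/2 := hUcβ
  have growU : ∀ τ, 0 ≤ τ → U τ ≤ u₀ → V τ ≤ δ →
      δ * U τ ≤ α * U τ * (γ - U τ) - U τ * V τ / (1 + U τ) :=
    fun τ hτ h1 h2 => RM.fact_growU hα (hUpos τ hτ) h1 (hVpos τ hτ) h2 hδ hu₀γ
  have lbU : ∀ τ, t₂ ≤ τ → (-M) * U τ ≤ α * U τ * (γ - U τ) - U τ * V τ / (1 + U τ) := by
    intro τ hτ
    have h := hbd τ hτ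
    have := RM.fact_lbU hα hγ (hUpos τ (by linarith)) h.1 (hVpos τ (by linarith)) h.2
    rw [hM]
    linarith [this]
  -- Step A : U eventually reaches Uc
  have hstepA : ∃ s₀, t₂ ≤ s₀ ∧ Uc ≤ U s₀ := by
    by_contra h
    push_neg at h
    have hVd : ∀ T, t₂ ≤ T → V T ≤ V t₂ * Real.exp (-(1/2) * (T - t₂)) := by
      intro T hT
      exact RM.deriv_ineq_le hT (RM.bridgeV hsol ht₂0)
        (fun τ hτ => decayV τ (by linarith [hτ.1]) (h τ hτ.1.le).le)
    have hVt₂ := hVpos t₂ ht₂0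
    set t₃ : ℝ := t₂ + 2 * max 0 (Real.log (V t₂ / δ)) with ht₃_def
    have ht₂t₃ : t₂ ≤ t₃ := by
      rw [ht₃_def]; have := le_max_left 0 (Real.log (V t₂ / δ)); linarith
    have hVδ : ∀ T, t₃ ≤ T → V T ≤ δ := by
      intro T hT
      have hTt₂ : t₂ ≤ T := le_trans ht₂t₃ hT
      have h2 : Real.log (V t₂ / δ) ≤ (1/2) * (T - t₂) := by
        have h3 : Real.log (V t₂/δ) ≤ max 0 (Real.log (V t₂/δ)) := le_max_right _ _
        rw [ht₃_def] at hT
        linarith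
      have h4 : V t₂ / δ ≤ Real.exp ((1/2) * (T - t₂)) := by
        rw [← Real.exp_log (div_pos hVt₂ hδpos)]
        exact Real.exp_le_exp.2 h2
      have h5 : V t₂ ≤ Real.exp ((1/2) * (T - t₂)) * δ := by
        rw [div_le_iff₀ hδpos] at h4; exact h4
      have emul : Real.exp ((1/2) * (T - t₂)) * Real.exp (-(1/2) * (T - t₂)) = 1 := by
        rw [← Real.exp_add]; ring_nf; exact Real.exp_zero
      have h6 := hVd T hTt₂
      have h7 := mul_le_mul_of_nonneg_right h5 (Real.exp_pos (-(1/2) * (T - t₂))).le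
      have e9 : (Real.exp ((1/2) * (T - t₂)) * δ) * Real.exp (-(1/2) * (T - t₂)) = δ := by
        rw [mul_comm (Real.exp ((1/2) * (T - t₂))) δ, mul_assoc, emul, mul_one]
      rw [e9] at h7
      linarith
    have ht₃0 : (0:ℝ) ≤ t₃ := by linarith
    set T : ℝ := t₃ + (max 0 (Real.log (Uc / U t₃)) + 1)/δ with hT_def
    have hUt₃ := hUpos t₃ ht₃0
    have ht₃T : t₃ ≤ T := by
      rw [hT_def]
      have : 0 ≤ (max 0 (Real.log (Uc / U t₃)) + 1)/δ := by positivity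
      linarith
    have hgrow := RM.deriv_ineq_ge (c := δ) ht₃T (RM.bridgeU hsol ht₃0)
      (fun τ hτ => growU τ (by linarith [hτ.1])
        (le_trans (h τ (by linarith [hτ.1])).le hUcu₀) (hVδ τ hτ.1.le))
    have hδT : δ * (T - t₃) = max 0 (Real.log (Uc / U t₃)) + 1 := by
      have hδne : δ ≠ 0 := ne_of_gt hδpos
      rw [hT_def]
      field_simp
      ring
    rw [hδT] at hgrow
    have hre := RM.exp_reach hUt₃ hUcpos
    have hcon := h T (by linarith)
    linarith only [hgrow, hre, hcon]
  obtain ⟨s₀, hs₀t₂, hs₀U⟩ := hstepA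
  have hs₀1 : (1:ℝ) ≤ s₀ := by linarith
  refine ⟨s₀, hs₀1, fun t ht => ?_⟩
  by_contra hcon
  push_neg at hcon
  have hs₀0 : (0:ℝ) ≤ s₀ := by linarith
  -- last time U was at level Uc
  obtain ⟨r, hrs₀, hrt, hUr, hafter⟩ := RM.last_ge
    (RM.contU hsol hs₀0) ht hs₀U (lt_trans hcon hΘU_lt_Uc)
  have hr0 : (0:ℝ) ≤ r := by linarith
  have hrt₂ : t₂ ≤ r := by linarith
  -- derivative bounds hold on (r,t)
  have hUler : ∀ τ, r ≤ τ → τ ≤ t → U τ ≤ Uc := by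
    intro τ h1 h2
    rcases eq_or_lt_of_le h1 with h|h
    · rw [← h, hUr]
    · exact (hafter τ h h2).le
  have hflbU : ∀ τ ∈ Ioo r t, (-M) * U τ ≤
      α * U τ * (γ - U τ) - U τ * V τ / (1 + U τ) :=
    fun τ hτ => lbU τ (by linarith [hτ.1])
  have hVleK₂ : V r ≤ K₂ := (hbd r hrt₂).2
  rcases le_or_gt δ (V t) with hcase | hcase
  · -- V stays large: time is short, U cannot drop below ΘU
    have hdecay := RM.deriv_ineq_le (c := -(1/2)) hrt.le (RM.bridgeV hsol hr0)
      (fun τ hτ => decayV τ (by linarith [hτ.1]) (hUler τ hτ.1.le hτ.2.le))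
    have htime : t - r ≤ T₂ := by
      rw [hT₂]
      refine RM.time_bound hδpos hK₂pos ?_
      calc δ ≤ V t := hcase
        _ ≤ V r * Real.exp (-(1/2) * (t - r)) := hdecay
        _ ≤ K₂ * Real.exp (-(1/2) * (t - r)) :=
            mul_le_mul_of_nonneg_right hVleK₂ (Real.exp_pos _).le
    have hlb := RM.deriv_ineq_ge (c := -M) hrt.le (RM.bridgeU hsol hr0) hflbU
    have hexp : Real.exp (-(M*T₂)) ≤ Real.exp (-M * (t - r)) := by
      apply Real.exp_le_exp.2
      have := mul_le_mul_of_nonneg_left htime hMpos.le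
      linarith only [this]
    have : ΘU ≤ U t := by
      rw [hΘU, hUr] at *
      calc Uc * Real.exp (-(M*T₂)) ≤ Uc * Real.exp (-M * (t - r)) :=
            mul_le_mul_of_nonneg_left hexp hUcpos.le
        _ ≤ U t := hlb
    linarith
  · rcases le_or_gt (V r) δ with hVr | hVr
    · -- V small on the whole interval : U grows
      have hVsmall : ∀ τ, r ≤ τ → τ ≤ t → V τ ≤ δ := by
        intro τ h1 h2
        have hb := RM.deriv_ineq_le (c := 0) h1 (RM.bridgeV hsol hr0)
          (fun σ hσ => by
            have hd := decayV σ (by linarith [hσ.1]) (hUler σ hσ.1.le (by linarith [hσ.2]))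
            have hVσ := hVpos σ (by linarith [hσ.1])
            have hz : (0:ℝ) * V σ = 0 := zero_mul _
            linarith only [hd, hVσ, hz])
        calc V τ ≤ V r * Real.exp (0 * (τ - r)) := hb
          _ = V r := by simp
          _ ≤ δ := hVr
      have hgrow := RM.deriv_ineq_ge (c := δ) hrt.le (RM.bridgeU hsol hr0)
        (fun τ hτ => growU τ (by linarith [hτ.1])
          (le_trans (hUler τ hτ.1.le hτ.2.le) hUcu₀) (hVsmall τ hτ.1.le hτ.2.le))
      have hexp1 : (1:ℝ) ≤ Real.exp (δ * (t - r)) :=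
        Real.one_le_exp (mul_nonneg hδpos.le (by linarith only [hrt.le]))
      rw [hUr] at hgrow
      have hq : Uc ≤ Uc * Real.exp (δ * (t - r)) :=
        le_mul_of_one_le_right hUcpos.le hexp1
      linarith only [hgrow, hq, hcon, hΘU_lt_Uc]
    · -- V crosses δ at time m
      obtain ⟨m, hrm, hmt, hVm, hVafter⟩ := RM.last_ge
        (RM.contV hsol hr0) hrt.le hVr.le hcase
      have hm0 : (0:ℝ) ≤ m := by linarith
      have hdecay := RM.deriv_ineq_le (c := -(1/2)) hrm (RM.bridgeV hsol hr0)
        (fun σ hσ => decayV σ (by linarith [hσ.1])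
          (hUler σ hσ.1.le (by linarith [hσ.2, hmt.le])))
      have htime : m - r ≤ T₂ := by
        rw [hT₂]
        refine RM.time_bound hδpos hK₂pos ?_
        calc δ = V m := hVm.symm
          _ ≤ V r * Real.exp (-(1/2) * (m - r)) := hdecay
          _ ≤ K₂ * Real.exp (-(1/2) * (m - r)) :=
              mul_le_mul_of_nonneg_right hVleK₂ (Real.exp_pos _).le
      have hlb := RM.deriv_ineq_ge (c := -M) hrm (RM.bridgeU hsol hr0)
        (fun σ hσ => lbU σ (by linarith [hσ.1]))
      have hUm : ΘU ≤ U m := by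
        rw [hΘU]
        have hexp : Real.exp (-(M*T₂)) ≤ Real.exp (-M * (m - r)) := by
          apply Real.exp_le_exp.2
          have := mul_le_mul_of_nonneg_left htime hMpos.le
          linarith only [this]
        calc Uc * Real.exp (-(M*T₂)) ≤ Uc * Real.exp (-M * (m - r)) :=
              mul_le_mul_of_nonneg_left hexp hUcpos.le
          _ = U r * Real.exp (-M * (m - r)) := by rw [hUr]
          _ ≤ U m := hlb
      have hVle : ∀ τ, m ≤ τ → τ ≤ t → V τ ≤ δ := by
        intro τ h1 h2
        rcases eq_or_lt_of_le h1 with h|h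
        · rw [← h, hVm]
        · exact (hVafter τ h h2).le
      have hgrow := RM.deriv_ineq_ge (c := δ) hmt.le (RM.bridgeU hsol hm0)
        (fun τ hτ => growU τ (by linarith [hτ.1])
          (le_trans (hUler τ (by linarith [hτ.1]) hτ.2.le) hUcu₀)
          (hVle τ hτ.1.le hτ.2.le))
      have hexp1 : (1:ℝ) ≤ Real.exp (δ * (t - m)) :=
        Real.one_le_exp (mul_nonneg hδpos.le (by linarith only [hmt.le]))
      have hUmpos := hUpos m hm0
      have hq : U m ≤ U m * Real.exp (δ * (t - m)) :=
        le_mul_of_one_le_right hUmpos.le hexp1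
      linarith only [hgrow, hq, hUm, hcon]
end RMpersist
section RMpersistV
variable {α β γ : ℝ}

/-- From exponential growth staying below K, bound the elapsed time. -/
lemma RM.time_bound' {x K d : ℝ} (hd : 0 < d) (hK : 0 < K)
    (h : d * Real.exp x ≤ K) : x ≤ Real.log (K/d) := by
  have e2 : Real.exp x ≤ K/d := by
    rw [le_div_iff₀ hd]; linarith [h]
  have e3 := (Real.log_le_log_iff (Real.exp_pos _) (by positivity)).2 e2
  rwa [Real.log_exp] at e3

/-- Uniform persistence of the predator. -/
lemma RM.persistV (hα : 0 < α) (hβ : 1 < β) (hγ : 0 < γ) {U V : ℝ → ℝ}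
    (hsol : ∀ t : ℝ, 0 ≤ t →
      HasDerivWithinAt U (α * U t * (γ - U t) - U t * V t / (1 + U t)) (Set.Ici 0) t ∧
      HasDerivWithinAt V (-(V t) + β * U t * V t / (1 + U t)) (Set.Ici 0) t)
    (hU0 : 0 < U 0) (hV0 : 0 < V 0) {η u₀ δ Uc K₁ C K₂ M T₂ ΘU T₅ T₄ ΘV : ℝ}
    (hη : 0 < η) (key_u₀ : β*u₀ = (1+η/2)*(1+u₀))
    (hu₀pos : 0 < u₀) (hu₀γ : u₀ < γ)
    (hδ : δ = α*(γ-u₀)/2) (hδpos : 0 < δ)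
    (hUc : Uc = min (1/(2*β)) u₀) (hUcpos : 0 < Uc)
    (hK₁ : K₁ = γ + 1) (hC : C = α*β*γ*K₁ + β*K₁) (hK₂ : K₂ = C + 1 + δ)
    (hM : M = α*K₁ + K₂) (hT₂ : T₂ = 2*Real.log (K₂/δ))
    (hΘU : ΘU = Uc * Real.exp (-(M*T₂)))
    (hT₅ : T₅ = Real.log (u₀/ΘU)/δ) (hT₄ : T₄ = T₅ + 2*T₅/η)
    (hΘV : ΘV = δ * Real.exp (-T₄)) :
    ∃ s₁ : ℝ, ∀ t, s₁ ≤ t → ΘV ≤ V t := by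
  have hβ0 : (0:ℝ) < β := by linarith
  have hUpos := RM.posU hα hβ hγ hsol hU0
  have hVpos := RM.posV hα hβ hγ hsol hU0 hV0
  obtain ⟨s₀, hs₀1, hUper⟩ := RM.persistU hα hβ hγ hsol hU0 hV0 hu₀pos hu₀γ
    hδ hδpos hUc hUcpos hK₁ hC hK₂ hM hT₂ hΘU
  have hs₀0 : (0:ℝ) ≤ s₀ := by linarith
  have hUcu₀ : Uc ≤ u₀ := by rw [hUc]; exact min_le_right _ _
  have hK₁pos : 0 < K₁ := by rw [hK₁]; linarith
  have hCpos : 0 < C := by rw [hC]; positivity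
  have hK₂pos : 0 < K₂ := by rw [hK₂]; linarith
  have hK₂δ : δ < K₂ := by rw [hK₂]; linarith
  have hMpos : 0 < M := by rw [hM]; positivity
  have hT₂pos : 0 < T₂ := by
    rw [hT₂]
    have := Real.log_pos ((one_lt_div hδpos).2 hK₂δ)
    linarith
  have hΘUpos : 0 < ΘU := by rw [hΘU]; positivity
  have hΘU_lt_Uc : ΘU < Uc := by
    rw [hΘU]
    have h := Real.exp_lt_one_iff.2 (show -(M*T₂) < 0 by nlinarith only [hMpos, hT₂pos])
    have := mul_lt_mul_of_pos_left h hUcpos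
    simpa using this
  have hΘUu₀ : ΘU < u₀ := lt_of_lt_of_le hΘU_lt_Uc hUcu₀
  have hT₅pos : 0 < T₅ := by
    rw [hT₅]
    exact div_pos (Real.log_pos ((one_lt_div hΘUpos).2 hΘUu₀)) hδpos
  have hT₅T₄ : T₅ ≤ T₄ := by
    have : 0 < 2*T₅/η := by positivity
    rw [hT₄]; linarith
  have hT₄pos : 0 < T₄ := lt_of_lt_of_le hT₅pos hT₅T₄
  have hΘVpos : 0 < ΘV := by rw [hΘV]; positivity
  have hΘVδ : ΘV < δ := by
    rw [hΘV]
    have h := Real.exp_lt_one_iff.2 (show -T₄ < 0 by linarith)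
    have := mul_lt_mul_of_pos_left h hδpos
    simpa using this
  -- pointwise derivative bounds
  have growU : ∀ τ, 0 ≤ τ → U τ ≤ u₀ → V τ ≤ δ →
      δ * U τ ≤ α * U τ * (γ - U τ) - U τ * V τ / (1 + U τ) :=
    fun τ hτ h1 h2 => RM.fact_growU hα (hUpos τ hτ) h1 (hVpos τ hτ) h2 hδ hu₀γ
  have growV : ∀ τ, 0 ≤ τ → u₀ ≤ U τ →
      (η/2) * V τ ≤ -(V τ) + β * U τ * V τ / (1 + U τ) :=
    fun τ hτ h => RM.fact_growV hβ0 hu₀pos h (hVpos τ hτ) key_u₀ hη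
  have lbV : ∀ τ, 0 ≤ τ → (-1) * V τ ≤ -(V τ) + β * U τ * V τ / (1 + U τ) :=
    fun τ hτ => RM.fact_lbV hβ0 (hUpos τ hτ) (hVpos τ hτ)
  -- invariance of {U ≥ u₀} while V ≤ δ
  have stayU : ∀ a b : ℝ, s₀ ≤ a → (∀ τ ∈ Icc a b, V τ ≤ δ) → u₀ ≤ U a →
      ∀ τ ∈ Icc a b, u₀ ≤ U τ := by
    intro a b ha hVb hUa
    refine RM.stay_ge (ρ := δ*ΘU) (by positivity)
      (RM.bridgeU hsol (by linarith)) (fun τ hτ hle => ?_) hUa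
    calc δ*ΘU ≤ δ*(U τ) :=
          mul_le_mul_of_nonneg_left (hUper τ (by linarith [hτ.1])) hδpos.le
      _ ≤ _ := growU τ (by linarith [hτ.1]) hle (hVb τ hτ)
  -- Step B : V eventually reaches δ
  have hstepB : ∃ s₁, s₀ ≤ s₁ ∧ δ ≤ V s₁ := by
    by_contra hno
    push_neg at hno
    -- B1 : U reaches u₀
    have hB1 : ∃ t₄, s₀ ≤ t₄ ∧ u₀ ≤ U t₄ := by
      by_contra h4
      push_neg at h4
      set T : ℝ := s₀ + (max 0 (Real.log (u₀ / U s₀)) + 1)/δ with hT_def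
      have hUs₀ := hUpos s₀ hs₀0
      have hs₀T : s₀ ≤ T := by
        rw [hT_def]
        have : 0 ≤ (max 0 (Real.log (u₀ / U s₀)) + 1)/δ := by positivity
        linarith
      have hgrow := RM.deriv_ineq_ge (c := δ) hs₀T (RM.bridgeU hsol hs₀0)
        (fun τ hτ => growU τ (by linarith [hτ.1]) (h4 τ hτ.1.le).le
          (hno τ hτ.1.le).le)
      have hδT : δ * (T - s₀) = max 0 (Real.log (u₀ / U s₀)) + 1 := by
        have hδne : δ ≠ 0 := ne_of_gt hδpos
        rw [hT_def]
        field_simp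
        ring
      rw [hδT] at hgrow
      have hre := RM.exp_reach hUs₀ hu₀pos
      have hcon := h4 T hs₀T
      linarith only [hgrow, hre, hcon]
    obtain ⟨t₄, ht₄s₀, ht₄U⟩ := hB1
    have ht₄0 : (0:ℝ) ≤ t₄ := by linarith
    -- B3 : V grows beyond δ
    set T : ℝ := t₄ + (max 0 (Real.log (δ / V t₄)) + 1)/(η/2) with hT_def
    have hVt₄ := hVpos t₄ ht₄0
    have ht₄T : t₄ ≤ T := by
      rw [hT_def]
      have : 0 ≤ (max 0 (Real.log (δ / V t₄)) + 1)/(η/2) := by positivity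
      linarith
    have hUge : ∀ τ ∈ Icc t₄ T, u₀ ≤ U τ :=
      stayU t₄ T ht₄s₀ (fun τ hτ => (hno τ (by linarith [hτ.1])).le) ht₄U
    have hgrow := RM.deriv_ineq_ge (c := η/2) ht₄T (RM.bridgeV hsol ht₄0)
      (fun τ hτ => growV τ (by linarith [hτ.1]) (hUge τ (Ioo_subset_Icc_self hτ)))
    have hηT : η/2 * (T - t₄) = max 0 (Real.log (δ / V t₄)) + 1 := by
      have hηne : η/2 ≠ 0 := by positivity
      rw [hT_def]
      field_simp
      ring
    rw [hηT] at hgrow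
    have hre := RM.exp_reach hVt₄ hδpos
    have hcon := hno T (by linarith)
    linarith only [hgrow, hre, hcon]
  obtain ⟨s₁, hs₁s₀, hs₁V⟩ := hstepB
  have hs₁0 : (0:ℝ) ≤ s₁ := by linarith
  refine ⟨s₁, fun t ht => ?_⟩
  by_contra hcon
  push_neg at hcon
  -- last time V was at level δ
  obtain ⟨r, hrs₁, hrt, hVr, hVafter⟩ := RM.last_ge
    (RM.contV hsol hs₁0) ht hs₁V (lt_trans hcon hΘVδ)
  have hr0 : (0:ℝ) ≤ r := by linarith
  have hrs₀ : s₀ ≤ r := by linarith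
  have hVle : ∀ τ, r ≤ τ → τ ≤ t → V τ ≤ δ := by
    intro τ h1 h2
    rcases eq_or_lt_of_le h1 with h|h
    · rw [← h, hVr]
    · exact (hVafter τ h h2).le
  -- overall decay bound for V
  have hlbV := RM.deriv_ineq_ge (c := -1) hrt.le (RM.bridgeV hsol hr0)
    (fun σ hσ => lbV σ (by linarith [hσ.1]))
  rcases le_or_gt u₀ (U r) with hUr | hUr
  · -- U stays above u₀ : V grows, contradiction
    have hUge := stayU r t hrs₀ (fun τ hτ => hVle τ hτ.1 hτ.2) hUr
    have hgrow := RM.deriv_ineq_ge (c := η/2) hrt.le (RM.bridgeV hsol hr0)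
      (fun τ hτ => growV τ (by linarith [hτ.1]) (hUge τ (Ioo_subset_Icc_self hτ)))
    have hexp1 : (1:ℝ) ≤ Real.exp (η/2 * (t - r)) :=
      Real.one_le_exp (mul_nonneg (by positivity) (by linarith only [hrt.le]))
    rw [hVr] at hgrow
    have hq : δ ≤ δ * Real.exp (η/2 * (t - r)) :=
      le_mul_of_one_le_right hδpos.le hexp1
    linarith only [hgrow, hq, hcon, hΘVδ]
  · -- U starts below u₀
    by_cases hx : ∃ w, w ∈ Icc r t ∧ u₀ ≤ U w
    · -- U crosses u₀ at time m
      obtain ⟨w, hw, hwU⟩ := hx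
      obtain ⟨m, hrm, hmw, hUm, hbefore⟩ :=
        RM.first_ge (RM.contU hsol hr0 |>.mono (Icc_subset_Icc le_rfl hw.2)) hw.1 hUr hwU
      have hmt : m ≤ t := le_trans hmw hw.2
      have hm0 : (0:ℝ) ≤ m := by linarith
      -- m - r ≤ T₅
      have hgrowU := RM.deriv_ineq_ge (c := δ) hrm.le (RM.bridgeU hsol hr0)
        (fun σ hσ => growU σ (by linarith [hσ.1]) (hbefore σ hσ.1.le hσ.2).le
          (hVle σ hσ.1.le (by linarith [hσ.2])))
      have hUrΘ : ΘU ≤ U r := hUper r hrs₀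
      have htime : m - r ≤ T₅ := by
        rw [hT₅]
        have h2 : ΘU * Real.exp (δ * (m - r)) ≤ u₀ := by
          calc ΘU * Real.exp (δ * (m - r)) ≤ U r * Real.exp (δ * (m - r)) :=
                mul_le_mul_of_nonneg_right hUrΘ (Real.exp_pos _).le
            _ ≤ U m := hgrowU
            _ = u₀ := hUm
        have h3 := RM.time_bound' hΘUpos hu₀pos h2
        rw [le_div_iff₀ hδpos]
        linarith only [h3]
      -- U stays above u₀ on [m, t]
      have hUge := stayU m t (by linarith) (fun τ hτ => hVle τ (by linarith [hτ.1]) hτ.2)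
        (le_of_eq hUm.symm)
      -- V grows on [m, t]
      have hgrowV := RM.deriv_ineq_ge (c := η/2) hmt (RM.bridgeV hsol hm0)
        (fun τ hτ => growV τ (by linarith [hτ.1]) (hUge τ (Ioo_subset_Icc_self hτ)))
      -- V m ≥ δ exp (-(m-r))
      have hlbVm := RM.deriv_ineq_ge (c := -1) hrm.le (RM.bridgeV hsol hr0)
        (fun σ hσ => lbV σ (by linarith [hσ.1]))
      have hVmlb : δ * Real.exp (-(m - r)) ≤ V m := by
        calc δ * Real.exp (-(m - r)) = V r * Real.exp (-1 * (m - r)) := by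
              rw [hVr]; ring_nf
          _ ≤ V m := hlbVm
      rcases le_or_gt (t - m) (2*T₅/η) with hcase2 | hcase2
      · -- total time ≤ T₄ : direct decay bound
        have htot : t - r ≤ T₄ := by rw [hT₄]; linarith only [htime, hcase2]
        have hexp : Real.exp (-T₄) ≤ Real.exp (-1 * (t - r)) := by
          apply Real.exp_le_exp.2
          linarith only [htot]
        have : ΘV ≤ V t := by
          rw [hΘV, hVr] at *
          calc δ * Real.exp (-T₄) ≤ δ * Real.exp (-1 * (t - r)) :=
                mul_le_mul_of_nonneg_left hexp hδpos.le
            _ ≤ V t := hlbV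
        linarith
      · -- V has grown back to δ : contradiction
        have hbig : T₅ ≤ η/2 * (t - m) := by
          rw [div_lt_iff₀ hη] at hcase2
          nlinarith only [hcase2, hη]
        have hee : Real.exp (-(m-r)) * Real.exp (η/2 * (t - m)) ≥
            Real.exp (-(T₅)) * Real.exp (T₅) := by
          apply mul_le_mul (Real.exp_le_exp.2 (by linarith only [htime]))
            (Real.exp_le_exp.2 (by linarith only [hbig])) (Real.exp_pos _).le
            (Real.exp_pos _).le
        have hee1 : Real.exp (-(T₅)) * Real.exp (T₅) = 1 := by
          rw [← Real.exp_add]; simp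
        have hchain : δ ≤ V t := by
          have c1 : V m * Real.exp (η/2 * (t - m)) ≤ V t := hgrowV
          have c2 : (δ * Real.exp (-(m-r))) * Real.exp (η/2 * (t - m)) ≤
              V m * Real.exp (η/2 * (t - m)) :=
            mul_le_mul_of_nonneg_right hVmlb (Real.exp_pos _).le
          have c3 : δ * (Real.exp (-(m-r)) * Real.exp (η/2 * (t - m))) ≥ δ * 1 := by
            rw [← hee1]
            exact mul_le_mul_of_nonneg_left (by linarith only [hee]) hδpos.le
          nlinarith only [c1, c2, c3, hδpos]
        linarith only [hchain, hcon, hΘVδ]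
    · -- U never reaches u₀ : total time ≤ T₅, decay bound suffices
      push_neg at hx
      have hgrowU := RM.deriv_ineq_ge (c := δ) hrt.le (RM.bridgeU hsol hr0)
        (fun σ hσ => growU σ (by linarith [hσ.1])
          (hx σ ⟨hσ.1.le, hσ.2.le⟩).le (hVle σ hσ.1.le hσ.2.le))
      have hUrΘ : ΘU ≤ U r := hUper r hrs₀
      have htot : t - r ≤ T₅ := by
        have h2 : ΘU * Real.exp (δ * (t - r)) ≤ u₀ := by
          calc ΘU * Real.exp (δ * (t - r)) ≤ U r * Real.exp (δ * (t - r)) :=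
                mul_le_mul_of_nonneg_right hUrΘ (Real.exp_pos _).le
            _ ≤ U t := hgrowU
            _ ≤ u₀ := (hx t ⟨hrt.le, le_rfl⟩).le
        have h3 := RM.time_bound' hΘUpos hu₀pos h2
        rw [hT₅, le_div_iff₀ hδpos]
        linarith only [h3]
      have hexp : Real.exp (-T₄) ≤ Real.exp (-1 * (t - r)) := by
        apply Real.exp_le_exp.2
        linarith only [htot, hT₅T₄]
      have : ΘV ≤ V t := by
        rw [hΘV, hVr] at *
        calc δ * Real.exp (-T₄) ≤ δ * Real.exp (-1 * (t - r)) :=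
              mul_le_mul_of_nonneg_left hexp hδpos.le
          _ ≤ V t := hlbV
      linarith
end RMpersistV

/-- Rosenzweig–MacArthur kinetic system: if `γ(β-1) > 1`, the system is uniformly
persistent: there is `Θ > 0` (independent of the solution) such that every solution
on `[0,∞)` with positive initial data satisfies `liminf U ≥ Θ` and `liminf V ≥ Θ`,
i.e. for every `ε > 0`, eventually `U t ≥ Θ - ε` and `V t ≥ Θ - ε`. -/
theorem uniform_persistence (α β γ : ℝ)
    (hα : 0 < α) (hβ : 1 < β) (hγ : 0 < γ) (h1 : 1 < γ * (β - 1)) :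
    ∃ Θ > (0 : ℝ), ∀ U V : ℝ → ℝ,
      (∀ t : ℝ, 0 ≤ t →
        HasDerivWithinAt U (α * U t * (γ - U t) - U t * V t / (1 + U t)) (Set.Ici 0) t ∧
        HasDerivWithinAt V (-(V t) + β * U t * V t / (1 + U t)) (Set.Ici 0) t) →
      0 < U 0 → 0 < V 0 →
      ∀ ε > (0 : ℝ),
        (∀ᶠ t in atTop, Θ - ε ≤ U t) ∧ (∀ᶠ t in atTop, Θ - ε ≤ V t) := by
  have h1γ : (0:ℝ) < 1 + γ := by linarith
  have hβγ : 1 + γ < β * γ := by nlinarith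
  obtain ⟨η, hη_def⟩ : ∃ η : ℝ, η = β * γ / (1 + γ) - 1 := ⟨_, rfl⟩
  have hη : 0 < η := by
    have : 1 < β*γ/(1+γ) := (one_lt_div h1γ).2 hβγ
    rw [hη_def]; linarith
  have hηβ : η < β - 1 := by
    have : β*γ/(1+γ) < β := (div_lt_iff₀ h1γ).2 (by nlinarith)
    rw [hη_def]; linarith
  have hηγ : β*γ = (1+η)*(1+γ) := by rw [hη_def]; field_simp; ring
  obtain ⟨u₀, hu₀_def⟩ : ∃ u₀ : ℝ, u₀ = (1+η/2)/(β-1-η/2) := ⟨_, rfl⟩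
  have hden : 0 < β-1-η/2 := by linarith
  have hu₀pos : 0 < u₀ := by rw [hu₀_def]; exact div_pos (by linarith) hden
  have key_u₀ : β*u₀ = (1+η/2)*(1+u₀) := by
    have hden' : β-1-η/2 ≠ 0 := ne_of_gt hden
    have h : u₀ * (β-1-η/2) = 1+η/2 := by rw [hu₀_def]; exact div_mul_cancel₀ _ hden'
    linear_combination h
  have hu₀γ : u₀ < γ := by
    have e : β*(u₀-γ) = -(η/2)*((1+γ)*(1+u₀)) := by
      linear_combination (1+γ)*key_u₀ - (1+u₀)*hηγ
    nlinarith [mul_pos h1γ (show (0:ℝ) < 1 + u₀ by linarith), hη, hβ]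
  obtain ⟨δ, hδ_def⟩ : ∃ δ : ℝ, δ = α*(γ-u₀)/2 := ⟨_, rfl⟩
  have hδpos : 0 < δ := by rw [hδ_def]; apply div_pos; nlinarith; norm_num
  obtain ⟨Uc, hUc_def⟩ : ∃ Uc : ℝ, Uc = min (1/(2*β)) u₀ := ⟨_, rfl⟩
  have hUcpos : 0 < Uc := by rw [hUc_def]; exact lt_min (by positivity) hu₀pos
  have hUcu₀ : Uc ≤ u₀ := by rw [hUc_def]; exact min_le_right _ _
  have hUcβ : β * Uc ≤ 1/2 := by
    rw [hUc_def]
    have h := min_le_left (1/(2*β)) u₀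
    have := mul_le_mul_of_nonneg_left h (by positivity : (0:ℝ) ≤ β)
    calc β * min (1/(2*β)) u₀ ≤ β * (1/(2*β)) := this
      _ = 1/2 := by field_simp
  obtain ⟨K₁, hK₁_def⟩ : ∃ K₁ : ℝ, K₁ = γ + 1 := ⟨_, rfl⟩
  have hK₁pos : 0 < K₁ := by rw [hK₁_def]; linarith
  obtain ⟨C, hC_def⟩ : ∃ C : ℝ, C = α*β*γ*K₁ + β*K₁ := ⟨_, rfl⟩
  have hCpos : 0 < C := by rw [hC_def]; positivity
  obtain ⟨K₂, hK₂_def⟩ : ∃ K₂ : ℝ, K₂ = C + 1 + δ := ⟨_, rfl⟩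
  have hK₂pos : 0 < K₂ := by rw [hK₂_def]; linarith
  have hK₂δ : δ < K₂ := by rw [hK₂_def]; linarith
  obtain ⟨M, hM_def⟩ : ∃ M : ℝ, M = α*K₁ + K₂ := ⟨_, rfl⟩
  have hMpos : 0 < M := by rw [hM_def]; positivity
  obtain ⟨T₂, hT₂_def⟩ : ∃ T₂ : ℝ, T₂ = 2*Real.log (K₂/δ) := ⟨_, rfl⟩
  have hT₂pos : 0 < T₂ := by
    rw [hT₂_def]
    have : 1 < K₂/δ := (one_lt_div hδpos).2 hK₂δ
    have := Real.log_pos this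
    linarith
  obtain ⟨ΘU, hΘU_def⟩ : ∃ ΘU : ℝ, ΘU = Uc * Real.exp (-(M*T₂)) := ⟨_, rfl⟩
  have hΘUpos : 0 < ΘU := by rw [hΘU_def]; positivity
  have hΘU_lt_Uc : ΘU < Uc := by
    rw [hΘU_def]
    nlinarith [Real.exp_lt_one_iff.2 (show -(M*T₂) < 0 by nlinarith), hUcpos]
  have hΘUu₀ : ΘU < u₀ := lt_of_lt_of_le hΘU_lt_Uc hUcu₀
  obtain ⟨T₅, hT₅_def⟩ : ∃ T₅ : ℝ, T₅ = Real.log (u₀/ΘU)/δ := ⟨_, rfl⟩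
  have hT₅pos : 0 < T₅ := by
    rw [hT₅_def]
    apply div_pos _ hδpos
    exact Real.log_pos ((one_lt_div hΘUpos).2 hΘUu₀)
  obtain ⟨T₄, hT₄_def⟩ : ∃ T₄ : ℝ, T₄ = T₅ + 2*T₅/η := ⟨_, rfl⟩
  have hT₄pos : 0 < T₄ := by rw [hT₄_def]; positivity
  have hT₅T₄ : T₅ ≤ T₄ := by
    have : 0 < 2*T₅/η := by positivity
    rw [hT₄_def]; linarith
  obtain ⟨ΘV, hΘV_def⟩ : ∃ ΘV : ℝ, ΘV = δ * Real.exp (-T₄) := ⟨_, rfl⟩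
  have hΘVpos : 0 < ΘV := by rw [hΘV_def]; positivity
  have hΘVδ : ΘV < δ := by
    rw [hΘV_def]
    nlinarith [Real.exp_lt_one_iff.2 (show -T₄ < 0 by linarith), hδpos]
  refine ⟨min ΘU ΘV, lt_min hΘUpos hΘVpos, ?_⟩
  intro U V hsol hU0 hV0
  obtain ⟨s₀, hs₀1, hU⟩ := RM.persistU hα hβ hγ hsol hU0 hV0 hu₀pos hu₀γ
    hδ_def hδpos hUc_def hUcpos hK₁_def hC_def hK₂_def hM_def hT₂_def hΘU_def
  obtain ⟨s₁, hV⟩ := RM.persistV hα hβ hγ hsol hU0 hV0 hη key_u₀ hu₀pos hu₀γ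
    hδ_def hδpos hUc_def hUcpos hK₁_def hC_def hK₂_def hM_def hT₂_def hΘU_def
    hT₅_def hT₄_def hΘV_def
  intro ε hε
  constructor
  · rw [eventually_atTop]
    refine ⟨s₀, fun t ht => ?_⟩
    have h1 := hU t ht
    have h2 : min ΘU ΘV ≤ ΘU := min_le_left _ _
    linarith
  · rw [eventually_atTop]
    refine ⟨s₁, fun t ht => ?_⟩
    have h1 := hV t ht
    have h2 : min ΘU ΘV ≤ ΘV := min_le_right _ _
    linarith
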